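/- For every n ≥ 1, the symmetric topological complexity of the n-sphere satisfies TC^S(S^n) ≤ 3; that is, the configuration space F(S^n;2) can be covered by two Z/2-invariant open sets over each of which the restricted endpoint fibration π' : P'S^n → F(S^n;2) admits a continuous Z/2-equivariant section. -/

import Mathlib

open scoped ENat

universe u v

/-- Space of paths in `X`: continuous maps from the unit interval. -/
abbrev PathSp (X : Type u) [TopologicalSpace X] := C(unitInterval, X)

/-- Reversal of a path. -/
def pathRev {X : Type u} [TopologicalSpace X] (γ : PathSp X) : PathSp X :=
  γ.comp ⟨unitInterval.symm, unitInterval.continuous_symm⟩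

/-- `P'X`: paths with distinct endpoints. -/
def PpX (X : Type u) [TopologicalSpace X] := {γ : PathSp X // γ 0 ≠ γ 1}

instance (X : Type u) [TopologicalSpace X] : TopologicalSpace (PpX X) :=
  instTopologicalSpaceSubtype

/-- Reversal involution on `P'X`. -/
def revP {X : Type u} [TopologicalSpace X] (γ : PpX X) : PpX X :=
  ⟨pathRev γ.1, by
    simp only [pathRev, ContinuousMap.comp_apply, ContinuousMap.coe_mk,
      unitInterval.symm_zero, unitInterval.symm_one]
    exact γ.2.symm⟩

/-- `F(X;2)`: ordered configuration space of two distinct points. -/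
def F2 (X : Type u) [TopologicalSpace X] := {z : X × X // z.1 ≠ z.2}

instance (X : Type u) [TopologicalSpace X] : TopologicalSpace (F2 X) :=
  instTopologicalSpaceSubtype

/-- The swap involution on `F(X;2)`. -/
def swapF {X : Type u} [TopologicalSpace X] (z : F2 X) : F2 X :=
  ⟨(z.1.2, z.1.1), z.2.symm⟩

/-- The two-endpoint map `π' : P'X → F(X;2)`. -/
def pip {X : Type u} [TopologicalSpace X] (γ : PpX X) : F2 X :=
  ⟨(γ.1 0, γ.1 1), γ.2⟩

/-- Quotient of `P'X` by the reversal involution. -/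
def PpQ (X : Type u) [TopologicalSpace X] := Quot (fun a b : PpX X => b = revP a)

/-- `B(X;2)`: unordered configuration space, quotient of `F(X;2)` by the swap. -/
def BX2 (X : Type u) [TopologicalSpace X] := Quot (fun a b : F2 X => b = swapF a)

instance (X : Type u) [TopologicalSpace X] : TopologicalSpace (PpQ X) :=
  inferInstanceAs (TopologicalSpace (Quot _))
instance (X : Type u) [TopologicalSpace X] : TopologicalSpace (BX2 X) :=
  inferInstanceAs (TopologicalSpace (Quot _))

/-- The quotient fibration `π_G : P'X/G → B(X;2)`. -/
def piG (X : Type u) [TopologicalSpace X] : PpQ X → BX2 X :=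
  Quot.map pip (by
    rintro a b rfl
    refine Subtype.ext (Prod.ext ?_ ?_) <;>
      simp [pip, revP, swapF, pathRev])

/-- `p` admits continuous local sections over an open cover of the base by `k` sets. -/
def SecCover {E : Type u} {B : Type v} [TopologicalSpace E] [TopologicalSpace B]
    (p : E → B) (k : ℕ) : Prop :=
  ∃ U : Fin k → Set B, (∀ i, IsOpen (U i)) ∧ (⋃ i, U i) = Set.univ ∧
    ∀ i, ∃ s : C(U i, E), ∀ x : U i, p (s x) = (x : B)

/-- The Schwarz genus of a map: minimal number of open sets covering the base over each
of which the map admits a continuous section (`⊤` if there is no such finite cover). -/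
noncomputable def genus {E : Type u} {B : Type v} [TopologicalSpace E] [TopologicalSpace B]
    (p : E → B) : ℕ∞ :=
  sInf {m : ℕ∞ | ∃ k : ℕ, m = (k : ℕ∞) ∧ SecCover p k}

/-- Topological complexity: the Schwarz genus of the two-endpoint path fibration. -/
noncomputable def TCx (X : Type u) [TopologicalSpace X] : ℕ∞ :=
  genus (fun γ : PathSp X => (γ 0, γ 1))

/-- Symmetric topological complexity: `1 +` the Schwarz genus of `π_G`. -/
noncomputable def TCS (X : Type u) [TopologicalSpace X] : ℕ∞ :=
  1 + genus (piG X)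

/-- The unit sphere `Sⁿ ⊆ ℝ^{n+1}`. -/
abbrev Sph (n : ℕ) := Metric.sphere (0 : EuclideanSpace ℝ (Fin (n + 1))) 1


/-! ### Auxiliary material for `stmt7` -/

open Topology
open scoped RealInnerProductSpace

section Plumbing

variable {X : Type u} [TopologicalSpace X]

/-- Quotient projection `F(X;2) → B(X;2)`. -/
def qBmk {X : Type u} [TopologicalSpace X] : F2 X → BX2 X := Quot.mk _

/-- Quotient projection `P'X → P'X/G`. -/
def qPmk {X : Type u} [TopologicalSpace X] : PpX X → PpQ X := Quot.mk _

lemma swapF_invol (z : F2 X) : swapF (swapF z) = z := rfl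

lemma mem_iff_of_quot_eq (W : Set (F2 X)) (hI : ∀ z ∈ W, swapF z ∈ W)
    {a b : F2 X} (h : qBmk a = qBmk b) :
    a ∈ W ↔ b ∈ W := by
  have h' := Quot.eqvGen_exact h
  clear h
  induction h' with
  | rel a b hab =>
    subst hab
    exact ⟨fun ha => hI a ha, fun hb => by simpa [swapF_invol] using hI _ hb⟩
  | refl a => exact Iff.rfl
  | symm a b _ ih => exact ih.symm
  | trans a b c _ _ ih1 ih2 => exact ih1.trans ih2

lemma isOpen_image_qB (W : Set (F2 X)) (hO : IsOpen W) (hI : ∀ z ∈ W, swapF z ∈ W) :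
    IsOpen (qBmk '' W : Set (BX2 X)) := by
  change IsOpen ((Quot.mk (fun a b : F2 X => b = swapF a)) '' W :
    Set (Quot (fun a b : F2 X => b = swapF a)))
  rw [← isQuotientMap_quot_mk.isOpen_preimage]
  have h : (Quot.mk (fun a b : F2 X => b = swapF a)) ⁻¹'
      ((Quot.mk (fun a b : F2 X => b = swapF a)) '' W) = W := by
    ext z
    constructor
    · rintro ⟨w, hw, hww⟩
      exact (mem_iff_of_quot_eq W hI hww).mp hw
    · exact fun hz => ⟨z, hz, rfl⟩
  rw [h]; exact hO

lemma qP_revP (γ : PpX X) : qPmk (revP γ) = qPmk γ :=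
  (@Quot.sound (PpX X) (fun a b => b = revP a) γ (revP γ) rfl).symm

/-- Descent of an equivariant section to one chart of the quotient fibration. -/
lemma one_chart (W : Set (F2 X)) (hO : IsOpen W) (hI : ∀ z ∈ W, swapF z ∈ W)
    (s : C(W, PpX X)) (hsec : ∀ z : W, pip (s z) = (z : F2 X))
    (heq : ∀ (z : W) (h : swapF (z : F2 X) ∈ W), s ⟨swapF (z : F2 X), h⟩ = revP (s z)) :
    ∃ U : Set (BX2 X), IsOpen U ∧ qBmk '' W = U ∧
      ∃ σ : C(U, PpQ X), ∀ u : U, piG X (σ u) = (u : BX2 X) := by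
  classical
  have wd : ∀ {a b : F2 X}, qBmk a = qBmk b → ∀ (ha : a ∈ W) (hb : b ∈ W),
      qPmk (s ⟨a, ha⟩) = qPmk (s ⟨b, hb⟩) := by
    intro a b h
    have h' := Quot.eqvGen_exact h
    clear h
    induction h' with
    | rel a b hab =>
      intro ha hb
      subst hab
      rw [heq ⟨a, ha⟩ hb]
      exact (qP_revP (s ⟨a, ha⟩)).symm
    | refl a => intro ha hb; rfl
    | symm a b h ih => intro ha hb; exact (ih hb ha).symm
    | trans a b c h1 h2 ih1 ih2 =>
      intro ha hc
      have hb : b ∈ W := (mem_iff_of_quot_eq W hI (Quot.eqvGen_sound h1)).mp ha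
      exact (ih1 ha hb).trans (ih2 hb hc)
  refine ⟨qBmk '' W, isOpen_image_qB W hO hI, rfl, ?_⟩
  have rep : ∀ u : (qBmk '' W : Set (BX2 X)), ∃ z : F2 X, z ∈ W ∧ qBmk z = (u : BX2 X) := by
    rintro ⟨u, w, hw, hwu⟩; exact ⟨w, hw, hwu⟩
  let σf : (qBmk '' W : Set (BX2 X)) → PpQ X :=
    fun u => qPmk (s ⟨(rep u).choose, (rep u).choose_spec.1⟩)
  have hσ_spec : ∀ (u : (qBmk '' W : Set (BX2 X))) {z : F2 X} (hz : z ∈ W),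
      qBmk z = (u : BX2 X) → σf u = qPmk (s ⟨z, hz⟩) := by
    intro u z hz hzu
    exact wd ((rep u).choose_spec.2.trans hzu.symm) _ _
  have hcont : Continuous σf := by
    rw [continuous_def]
    intro V hV
    set A : Set (F2 X) := Subtype.val '' ((fun w : W => qPmk (s w)) ⁻¹' V) with hA
    have hAopen : IsOpen A :=
      hO.isOpenMap_subtype_val _ (hV.preimage ((continuous_quot_mk).comp s.continuous))
    have hAmem : ∀ z (hz : z ∈ W), (z ∈ A ↔ qPmk (s ⟨z, hz⟩) ∈ V) := by
      intro z hz
      constructor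
      · rintro ⟨⟨w, hw⟩, hwv, rfl⟩; exact hwv
      · intro h; exact ⟨⟨z, hz⟩, h, rfl⟩
    have hAsub : ∀ z ∈ A, z ∈ W := by
      rintro z ⟨⟨w, hw⟩, _, rfl⟩; exact hw
    have hAinv : ∀ z ∈ A, swapF z ∈ A := by
      rintro z ⟨⟨w, hw⟩, hwv, rfl⟩
      refine ((hAmem _ (hI w hw))).mpr ?_
      rw [heq ⟨w, hw⟩ (hI w hw), qP_revP]
      exact hwv
    have hT : IsOpen (qBmk '' A : Set (BX2 X)) := isOpen_image_qB A hAopen hAinv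
    have hpre : σf ⁻¹' V = Subtype.val ⁻¹' (qBmk '' A) := by
      ext u
      constructor
      · intro hu
        obtain ⟨z, hz, hzu⟩ := rep u
        rw [Set.mem_preimage, hσ_spec u hz hzu] at hu
        exact ⟨z, (hAmem z hz).mpr hu, hzu⟩
      · rintro ⟨w, hwA, hwu⟩
        have hw : w ∈ W := hAsub w hwA
        rw [Set.mem_preimage, hσ_spec u hw hwu]
        exact (hAmem w hw).mp hwA
    rw [hpre]
    exact hT.preimage continuous_subtype_val
  refine ⟨⟨σf, hcont⟩, ?_⟩
  intro u
  obtain ⟨z, hz, hzu⟩ := rep u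
  show piG X (σf u) = (u : BX2 X)
  rw [hσ_spec u hz hzu]
  have hmap : piG X (qPmk (s ⟨z, hz⟩)) = qBmk (pip (s ⟨z, hz⟩)) := rfl
  rw [hmap, hsec ⟨z, hz⟩]
  exact hzu

lemma secCover_two
    (W₁ W₂ : Set (F2 X)) (hO₁ : IsOpen W₁) (hO₂ : IsOpen W₂)
    (hI₁ : ∀ z ∈ W₁, swapF z ∈ W₁) (hI₂ : ∀ z ∈ W₂, swapF z ∈ W₂)
    (hcov : W₁ ∪ W₂ = Set.univ)
    (s₁ : C(W₁, PpX X)) (hsec₁ : ∀ z : W₁, pip (s₁ z) = (z : F2 X))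
    (heq₁ : ∀ (z : W₁) (h : swapF (z : F2 X) ∈ W₁), s₁ ⟨swapF (z : F2 X), h⟩ = revP (s₁ z))
    (s₂ : C(W₂, PpX X)) (hsec₂ : ∀ z : W₂, pip (s₂ z) = (z : F2 X))
    (heq₂ : ∀ (z : W₂) (h : swapF (z : F2 X) ∈ W₂), s₂ ⟨swapF (z : F2 X), h⟩ = revP (s₂ z)) :
    SecCover (piG X) 2 := by
  obtain ⟨U₁, hU₁, him₁, σ₁, hσ₁⟩ := one_chart W₁ hO₁ hI₁ s₁ hsec₁ heq₁
  obtain ⟨U₂, hU₂, him₂, σ₂, hσ₂⟩ := one_chart W₂ hO₂ hI₂ s₂ hsec₂ heq₂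
  refine ⟨![U₁, U₂], ?_, ?_, ?_⟩
  · intro i; fin_cases i
    · simpa using hU₁
    · simpa using hU₂
  · rw [Set.eq_univ_iff_forall]
    intro b
    induction b using Quot.ind with
    | _ z =>
      have hz : z ∈ W₁ ∪ W₂ := hcov ▸ Set.mem_univ z
      show qBmk z ∈ ⋃ i, ![U₁, U₂] i
      rw [Set.mem_iUnion]
      cases hz with
      | inl h =>
        exact ⟨0, by simpa using him₁ ▸ Set.mem_image_of_mem qBmk h⟩
      | inr h =>
        exact ⟨1, by simpa using him₂ ▸ Set.mem_image_of_mem qBmk h⟩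
  · intro i; fin_cases i
    · exact ⟨σ₁, hσ₁⟩
    · exact ⟨σ₂, hσ₂⟩

lemma genus_le_of_secCover {E : Type u} {B : Type v} [TopologicalSpace E] [TopologicalSpace B]
    {p : E → B} {k : ℕ} (h : SecCover p k) : genus p ≤ (k : ℕ∞) :=
  sInf_le ⟨k, rfl, h⟩

end Plumbing

section Geometry

noncomputable section

namespace SphAux

variable {n : ℕ}

/-- Piecewise-linear coefficient functions of the motion plan. -/
def cA (t : ℝ) : ℝ := max 0 (1 - 4*t)
def cB (t : ℝ) : ℝ := min (4*t) (max (2 - 4*t) (4*t - 4))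
def cC (t : ℝ) : ℝ := max 0 (min (4*t - 1) (3 - 4*t))
def cD (t : ℝ) : ℝ := max 0 (4*t - 3)

lemma cA_cont : Continuous cA := by unfold cA; fun_prop
lemma cB_cont : Continuous cB := by unfold cB; fun_prop
lemma cC_cont : Continuous cC := by unfold cC; fun_prop
lemma cD_cont : Continuous cD := by unfold cD; fun_prop

lemma cA_symm (t : ℝ) : cA (1 - t) = cD t := by
  unfold cA cD; rw [show 1 - 4*(1-t) = 4*t - 3 by ring]

lemma cD_symm (t : ℝ) : cD (1 - t) = cA t := by
  unfold cA cD; rw [show 4*(1-t) - 3 = 1 - 4*t by ring]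

lemma cC_symm (t : ℝ) : cC (1 - t) = cC t := by
  unfold cC
  rw [show 4*(1-t) - 1 = 3 - 4*t by ring, show 3 - 4*(1-t) = 4*t - 1 by ring, min_comm]

lemma cB_symm (t : ℝ) : cB (1 - t) = -(cB t) := by
  unfold cB
  simp only [min_def, max_def]
  split_ifs <;> linarith

/-- the endpoints of a configuration, as vectors. -/
def ptX (z : F2 (Sph n)) : EuclideanSpace ℝ (Fin (n+1)) := (z.1.1 : EuclideanSpace ℝ (Fin (n+1)))
def ptY (z : F2 (Sph n)) : EuclideanSpace ℝ (Fin (n+1)) := (z.1.2 : EuclideanSpace ℝ (Fin (n+1)))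

lemma contX : Continuous (ptX (n := n)) :=
  continuous_subtype_val.comp (continuous_fst.comp continuous_subtype_val)

lemma contY : Continuous (ptY (n := n)) :=
  continuous_subtype_val.comp (continuous_snd.comp continuous_subtype_val)

lemma ptX_swap (z : F2 (Sph n)) : ptX (swapF z) = ptY z := rfl
lemma ptY_swap (z : F2 (Sph n)) : ptY (swapF z) = ptX z := rfl

lemma normX (z : F2 (Sph n)) : ‖ptX z‖ = 1 := mem_sphere_zero_iff_norm.mp z.1.1.2
lemma normY (z : F2 (Sph n)) : ‖ptY z‖ = 1 := mem_sphere_zero_iff_norm.mp z.1.2.2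

lemma sub_ne (z : F2 (Sph n)) : ptX z - ptY z ≠ 0 :=
  sub_ne_zero.mpr (fun h => z.2 (Subtype.coe_injective h))

lemma normW_pos (z : F2 (Sph n)) : 0 < ‖ptX z - ptY z‖^2 :=
  pow_pos (norm_pos_iff.mpr (sub_ne z)) 2

lemma normW_eq (z : F2 (Sph n)) : ‖ptX z - ptY z‖^2 = 2 - 2*⟪ptX z, ptY z⟫ := by
  have h := norm_sub_sq_real (ptX z) (ptY z)
  rw [normX, normY] at h
  rw [h]; ring

lemma ip_lt_one (z : F2 (Sph n)) : ⟪ptX z, ptY z⟫ < 1 := by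
  have h1 := normW_pos z
  rw [normW_eq z] at h1
  linarith

/-- The motion plan: a piecewise-geodesic curve (before normalization), going
`x → (x-y) → e → (y-x) → y`. -/
def phi (e : EuclideanSpace ℝ (Fin (n+1))) (z : F2 (Sph n)) (t : ℝ) :
    EuclideanSpace ℝ (Fin (n+1)) :=
  cA t • ptX z + cB t • (ptX z - ptY z) + cC t • e + cD t • ptY z

lemma phi_swap (e : EuclideanSpace ℝ (Fin (n+1))) (z : F2 (Sph n)) (t : ℝ) :
    phi e (swapF z) t = phi e z (1 - t) := by
  unfold phi
  rw [ptX_swap, ptY_swap, cA_symm, cB_symm, cC_symm, cD_symm]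
  module

lemma phi_zero (e : EuclideanSpace ℝ (Fin (n+1))) (z : F2 (Sph n)) :
    phi e z 0 = ptX z := by
  have hA : cA 0 = 1 := by unfold cA; norm_num
  have hB : cB 0 = 0 := by unfold cB; norm_num
  have hC : cC 0 = 0 := by unfold cC; norm_num
  have hD : cD 0 = 0 := by unfold cD; norm_num
  unfold phi
  rw [hA, hB, hC, hD]
  simp

lemma phi_one (e : EuclideanSpace ℝ (Fin (n+1))) (z : F2 (Sph n)) :
    phi e z 1 = ptY z := by
  have hA : cA 1 = 0 := by unfold cA; norm_num
  have hB : cB 1 = 0 := by unfold cB; norm_num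
  have hC : cC 1 = 0 := by unfold cC; norm_num
  have hD : cD 1 = 1 := by unfold cD; norm_num
  unfold phi
  rw [hA, hB, hC, hD]
  simp

/-- The chart associated to a unit vector `e`: configurations whose chord is not
parallel to `e`. -/
def Wset (e : EuclideanSpace ℝ (Fin (n+1))) : Set (F2 (Sph n)) :=
  {z | (ptX z - ptY z) - ⟪ptX z - ptY z, e⟫ • e ≠ 0}

lemma isOpen_Wset (e : EuclideanSpace ℝ (Fin (n+1))) : IsOpen (Wset (n := n) e) := by
  have hc : Continuous fun z : F2 (Sph n) =>
      (ptX z - ptY z) - ⟪ptX z - ptY z, e⟫ • e := by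
    have h : Continuous fun z : F2 (Sph n) => ptX z - ptY z := contX.sub (contY (n := n))
    exact h.sub ((Continuous.inner (𝕜 := ℝ) h continuous_const).smul continuous_const)
  exact (isOpen_compl_singleton (x := (0 : EuclideanSpace ℝ (Fin (n+1))))).preimage hc

lemma Wset_inv (e : EuclideanSpace ℝ (Fin (n+1))) :
    ∀ z ∈ Wset (n := n) e, swapF z ∈ Wset e := by
  intro z hz h0
  apply hz
  rw [ptX_swap, ptY_swap] at h0
  have hin : ⟪ptY z - ptX z, e⟫ = -⟪ptX z - ptY z, e⟫ := by
    rw [← inner_neg_left, neg_sub]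
  rw [hin] at h0
  have : (ptX z - ptY z) - ⟪ptX z - ptY z, e⟫ • e
      = -((ptY z - ptX z) - (-⟪ptX z - ptY z, e⟫) • e) := by module
  rw [this, h0, neg_zero]

lemma Wset_not_par {e : EuclideanSpace ℝ (Fin (n+1))} (he : ‖e‖ = 1) {z : F2 (Sph n)}
    (hz : z ∈ Wset e) (r : ℝ) : ptX z - ptY z ≠ r • e := by
  intro h
  apply hz
  show ptX z - ptY z - ⟪ptX z - ptY z, e⟫ • e = 0
  rw [h, real_inner_smul_left, real_inner_self_eq_norm_sq, he]
  simp

lemma phi_ne_zero {e : EuclideanSpace ℝ (Fin (n+1))} (he : ‖e‖ = 1) {z : F2 (Sph n)}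
    (hz : z ∈ Wset e) {t : ℝ} (ht0 : 0 ≤ t) (ht1 : t ≤ 1) : phi e z t ≠ 0 := by
  set x := ptX z with hx
  set y := ptY z with hy
  have hxx : ⟪x, x⟫ = 1 := by
    rw [real_inner_self_eq_norm_sq, normX]; norm_num
  have hyy : ⟪y, y⟫ = 1 := by
    rw [real_inner_self_eq_norm_sq, normY]; norm_num
  have hip := ip_lt_one z
  have hw2 := normW_pos z
  have hweq := normW_eq z
  have hxw : ⟪x, x - y⟫ = 1 - ⟪x, y⟫ := by rw [inner_sub_right, hxx]
  have hyw : ⟪y, x - y⟫ = ⟪x, y⟫ - 1 := by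
    rw [inner_sub_right, hyy, real_inner_comm y x]
  have hww : ⟪x - y, x - y⟫ = ‖x - y‖^2 := real_inner_self_eq_norm_sq _
  intro h0
  rcases le_or_gt t (1/4) with h1 | h1
  · -- first geodesic leg, from x to the chord direction
    have hA : cA t = 1 - 4*t := max_eq_right (by linarith)
    have hB : cB t = 4*t := by
      unfold cB; rw [max_eq_left (by linarith), min_eq_left (by linarith)]
    have hC : cC t = 0 := by
      unfold cC; rw [min_eq_left (by linarith)]; exact max_eq_left (by linarith)
    have hD : cD t = 0 := max_eq_left (by linarith)
    rw [phi, hA, hB, hC, hD, zero_smul, zero_smul, add_zero, add_zero] at h0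
    have h0' : ⟪(1 - 4*t) • x + (4*t) • (x - y), x - y⟫ = 0 := by
      rw [h0, inner_zero_left]
    rw [inner_add_left, real_inner_smul_left, real_inner_smul_left, hxw, hww] at h0'
    nlinarith [mul_pos (show (0:ℝ) < 1 - ⟪x, y⟫ by linarith)
      (show (0:ℝ) < 1 + 4*t by linarith)]
  rcases le_or_gt t (1/2) with h2 | h2
  · -- second leg, from the chord direction to e
    have hA : cA t = 0 := max_eq_left (by linarith)
    have hB : cB t = 2 - 4*t := by
      unfold cB; rw [max_eq_left (by linarith), min_eq_right (by linarith)]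
    have hC : cC t = 4*t - 1 := by
      unfold cC; rw [min_eq_left (by linarith)]; exact max_eq_right (by linarith)
    have hD : cD t = 0 := max_eq_left (by linarith)
    rw [phi, hA, hB, hC, hD, zero_smul, zero_smul, zero_add, add_zero] at h0
    rcases eq_or_ne (2 - 4*t) 0 with hc | hc
    · rw [hc, zero_smul, zero_add] at h0
      have ht : t = 1/2 := by linarith
      rw [ht] at h0
      norm_num at h0
      rw [h0] at he
      simp at he
    · have hpar : x - y = ((2 - 4*t)⁻¹ * -(4*t - 1)) • e := by
        have h1' : (2 - 4*t) • (x - y) = (-(4*t - 1)) • e := by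
          have := eq_neg_of_add_eq_zero_left h0
          rw [this, neg_smul]
        calc x - y = (2 - 4*t)⁻¹ • ((2 - 4*t) • (x - y)) := (inv_smul_smul₀ hc _).symm
          _ = (2 - 4*t)⁻¹ • ((-(4*t - 1)) • e) := by rw [h1']
          _ = ((2 - 4*t)⁻¹ * -(4*t - 1)) • e := by rw [smul_smul]
      exact Wset_not_par he hz _ hpar
  rcases le_or_gt t (3/4) with h3 | h3
  · -- third leg, from e to the reversed chord direction
    have hA : cA t = 0 := max_eq_left (by linarith)
    have hB : cB t = 2 - 4*t := by
      unfold cB; rw [max_eq_left (by linarith), min_eq_right (by linarith)]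
    have hC : cC t = 3 - 4*t := by
      unfold cC; rw [min_eq_right (by linarith)]; exact max_eq_right (by linarith)
    have hD : cD t = 0 := max_eq_left (by linarith)
    rw [phi, hA, hB, hC, hD, zero_smul, zero_smul, zero_add, add_zero] at h0
    have hc : (2 - 4*t) ≠ 0 := by intro h; linarith [h]
    have hpar : x - y = ((2 - 4*t)⁻¹ * -(3 - 4*t)) • e := by
      have h1' : (2 - 4*t) • (x - y) = (-(3 - 4*t)) • e := by
        have := eq_neg_of_add_eq_zero_left h0
        rw [this, neg_smul]
      calc x - y = (2 - 4*t)⁻¹ • ((2 - 4*t) • (x - y)) := (inv_smul_smul₀ hc _).symm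
        _ = (2 - 4*t)⁻¹ • ((-(3 - 4*t)) • e) := by rw [h1']
        _ = ((2 - 4*t)⁻¹ * -(3 - 4*t)) • e := by rw [smul_smul]
    exact Wset_not_par he hz _ hpar
  · -- last leg, from the reversed chord direction to y
    have hA : cA t = 0 := max_eq_left (by linarith)
    have hB : cB t = 4*t - 4 := by
      unfold cB; rw [max_eq_right (by linarith), min_eq_right (by linarith)]
    have hC : cC t = 0 := by
      unfold cC; rw [min_eq_right (by linarith)]; exact max_eq_left (by linarith)
    have hD : cD t = 4*t - 3 := max_eq_right (by linarith)
    rw [phi, hA, hB, hC, hD, zero_smul, zero_smul, zero_add, add_zero] at h0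
    have h0' : ⟪(4*t - 4) • (x - y) + (4*t - 3) • y, x - y⟫ = 0 := by
      rw [h0, inner_zero_left]
    rw [inner_add_left, real_inner_smul_left, real_inner_smul_left, hww, hyw] at h0'
    nlinarith [mul_nonneg (show (0:ℝ) ≤ 4 - 4*t by linarith) hw2.le,
      mul_pos (show (0:ℝ) < 4*t - 3 by linarith)
        (show (0:ℝ) < 1 - ⟪x, y⟫ by linarith)]

/-- The normalized motion plan. -/
def nphi (e : EuclideanSpace ℝ (Fin (n+1))) (z : F2 (Sph n)) (t : ℝ) :
    EuclideanSpace ℝ (Fin (n+1)) :=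
  ‖phi e z t‖⁻¹ • phi e z t

lemma nphi_mem {e : EuclideanSpace ℝ (Fin (n+1))} (he : ‖e‖ = 1) {z : F2 (Sph n)}
    (hz : z ∈ Wset e) {t : ℝ} (ht0 : 0 ≤ t) (ht1 : t ≤ 1) :
    nphi e z t ∈ Sph n := by
  rw [mem_sphere_zero_iff_norm, nphi, norm_smul, norm_inv, norm_norm,
    inv_mul_cancel₀ (norm_ne_zero_iff.mpr (phi_ne_zero he hz ht0 ht1))]

lemma nphi_zero {e : EuclideanSpace ℝ (Fin (n+1))} (z : F2 (Sph n)) :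
    nphi e z 0 = ptX z := by
  rw [nphi, phi_zero, normX, inv_one, one_smul]

lemma nphi_one {e : EuclideanSpace ℝ (Fin (n+1))} (z : F2 (Sph n)) :
    nphi e z 1 = ptY z := by
  rw [nphi, phi_one, normY, inv_one, one_smul]

lemma nphi_swap (e : EuclideanSpace ℝ (Fin (n+1))) (z : F2 (Sph n)) (t : ℝ) :
    nphi e (swapF z) t = nphi e z (1 - t) := by
  rw [nphi, nphi, phi_swap]

/-- The jointly continuous motion plan over a chart. -/
def Fmap (e : EuclideanSpace ℝ (Fin (n+1))) (he : ‖e‖ = 1) :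
    C((Wset (n := n) e) × unitInterval, Sph n) where
  toFun p := ⟨nphi e p.1.1 p.2, nphi_mem he p.1.2 p.2.2.1 p.2.2.2⟩
  continuous_toFun := by
    apply Continuous.subtype_mk
    have hx : Continuous fun p : (Wset (n := n) e) × unitInterval => ptX (p.1 : F2 (Sph n)) :=
      contX.comp (continuous_subtype_val.comp continuous_fst)
    have hy : Continuous fun p : (Wset (n := n) e) × unitInterval => ptY (p.1 : F2 (Sph n)) :=
      contY.comp (continuous_subtype_val.comp continuous_fst)
    have ht : Continuous fun p : (Wset (n := n) e) × unitInterval => (p.2 : ℝ) :=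
      continuous_subtype_val.comp continuous_snd
    have hphi : Continuous fun p : (Wset (n := n) e) × unitInterval =>
        phi e (p.1 : F2 (Sph n)) (p.2 : ℝ) := by
      unfold phi
      exact ((((cA_cont.comp ht).smul hx).add
        ((cB_cont.comp ht).smul (hx.sub hy))).add
        ((cC_cont.comp ht).smul continuous_const)).add ((cD_cont.comp ht).smul hy)
    have hne : ∀ p : (Wset (n := n) e) × unitInterval,
        phi e (p.1 : F2 (Sph n)) (p.2 : ℝ) ≠ 0 :=
      fun p => phi_ne_zero he p.1.2 p.2.2.1 p.2.2.2
    exact ((hphi.norm.inv₀ (fun p => norm_ne_zero_iff.mpr (hne p))).smul hphi)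

lemma Fmap_coe (e : EuclideanSpace ℝ (Fin (n+1))) (he : ‖e‖ = 1)
    (p : (Wset (n := n) e) × unitInterval) :
    ((Fmap e he p : Sph n) : EuclideanSpace ℝ (Fin (n+1))) = nphi e p.1.1 p.2 := rfl

/-- The underlying function of the equivariant section over a chart. -/
def secFun (e : EuclideanSpace ℝ (Fin (n+1))) (he : ‖e‖ = 1) (w : Wset (n := n) e) :
    PpX (Sph n) :=
  ⟨(Fmap e he).curry w, by
    intro hcon
    apply sub_ne (w : F2 (Sph n))
    have h0 : (((Fmap e he).curry w 0 : Sph n) : EuclideanSpace ℝ (Fin (n+1)))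
        = ptX (w : F2 (Sph n)) := by
      rw [ContinuousMap.curry_apply, Fmap_coe]
      simp only [Set.Icc.coe_zero]
      exact nphi_zero _
    have h1 : (((Fmap e he).curry w 1 : Sph n) : EuclideanSpace ℝ (Fin (n+1)))
        = ptY (w : F2 (Sph n)) := by
      rw [ContinuousMap.curry_apply, Fmap_coe]
      simp only [Set.Icc.coe_one]
      exact nphi_one _
    rw [← h0, ← h1, hcon, sub_self]⟩

/-- The equivariant section over a chart. -/
def secW (e : EuclideanSpace ℝ (Fin (n+1))) (he : ‖e‖ = 1) :
    C(Wset (n := n) e, PpX (Sph n)) :=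
  ⟨secFun e he, Continuous.subtype_mk ((Fmap e he).curry.continuous) _⟩

lemma secW_pip (e : EuclideanSpace ℝ (Fin (n+1))) (he : ‖e‖ = 1) (w : Wset (n := n) e) :
    pip (secW e he w) = (w : F2 (Sph n)) := by
  apply Subtype.ext
  apply Prod.ext
  · apply Subtype.ext
    show (((Fmap e he).curry w 0 : Sph n) : EuclideanSpace ℝ (Fin (n+1))) = _
    rw [ContinuousMap.curry_apply, Fmap_coe]
    simp only [Set.Icc.coe_zero]
    exact nphi_zero _
  · apply Subtype.ext
    show (((Fmap e he).curry w 1 : Sph n) : EuclideanSpace ℝ (Fin (n+1))) = _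
    rw [ContinuousMap.curry_apply, Fmap_coe]
    simp only [Set.Icc.coe_one]
    exact nphi_one _

lemma secW_equiv (e : EuclideanSpace ℝ (Fin (n+1))) (he : ‖e‖ = 1) (w : Wset (n := n) e)
    (h : swapF (w : F2 (Sph n)) ∈ Wset e) :
    secW e he ⟨swapF (w : F2 (Sph n)), h⟩ = revP (secW e he w) := by
  apply Subtype.ext
  apply ContinuousMap.ext
  intro t
  apply Subtype.ext
  show nphi e (swapF (w : F2 (Sph n))) (t : ℝ) = nphi e (w : F2 (Sph n)) ((unitInterval.symm t : unitInterval) : ℝ)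
  rw [unitInterval.coe_symm_eq, nphi_swap]

end SphAux

end

end Geometry

/-- For `n ≥ 1`, `F(Sⁿ;2)` is covered by two invariant open sets over which
`π'` admits continuous equivariant sections; consequently `TC^S(Sⁿ) ≤ 3`. -/
theorem stmt7 (n : ℕ) (hn : 1 ≤ n) :
    (∃ W₁ W₂ : Set (F2 (Sph n)),
      IsOpen W₁ ∧ IsOpen W₂ ∧
      (∀ z ∈ W₁, swapF z ∈ W₁) ∧ (∀ z ∈ W₂, swapF z ∈ W₂) ∧
      W₁ ∪ W₂ = Set.univ ∧
      (∃ s : C(W₁, PpX (Sph n)),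
        (∀ z : W₁, pip (s z) = (z : F2 (Sph n))) ∧
        (∀ (z : W₁) (h : swapF (z : F2 (Sph n)) ∈ W₁),
          s ⟨swapF (z : F2 (Sph n)), h⟩ = revP (s z))) ∧
      (∃ s : C(W₂, PpX (Sph n)),
        (∀ z : W₂, pip (s z) = (z : F2 (Sph n))) ∧
        (∀ (z : W₂) (h : swapF (z : F2 (Sph n)) ∈ W₂),
          s ⟨swapF (z : F2 (Sph n)), h⟩ = revP (s z)))) ∧
    TCS (Sph n) ≤ 3 := by
  classical
  set e₁ : EuclideanSpace ℝ (Fin (n+1)) := EuclideanSpace.single ⟨0, by omega⟩ (1 : ℝ)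
    with he₁def
  set e₂ : EuclideanSpace ℝ (Fin (n+1)) := EuclideanSpace.single ⟨1, by omega⟩ (1 : ℝ)
    with he₂def
  have he₁ : ‖e₁‖ = 1 := by rw [he₁def, EuclideanSpace.norm_single, norm_one]
  have he₂ : ‖e₂‖ = 1 := by rw [he₂def, EuclideanSpace.norm_single, norm_one]
  -- the two charts cover the configuration space
  have hcov : SphAux.Wset (n := n) e₁ ∪ SphAux.Wset e₂ = Set.univ := by
    rw [Set.eq_univ_iff_forall]
    intro z
    by_contra hz
    rw [Set.mem_union, not_or] at hz
    obtain ⟨hz1, hz2⟩ := hz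
    simp only [SphAux.Wset, Set.mem_setOf_eq, not_not] at hz1 hz2
    set w := SphAux.ptX z - SphAux.ptY z with hw
    have h1 : w = ⟪w, e₁⟫ • e₁ := sub_eq_zero.mp hz1
    have h2 : w = ⟪w, e₂⟫ • e₂ := sub_eq_zero.mp hz2
    have horth : ⟪e₂, e₁⟫ = 0 := by
      rw [he₂def, he₁def, EuclideanSpace.inner_single_left, EuclideanSpace.single_apply]
      simp [Fin.ext_iff]
    have hcoef : ⟪w, e₁⟫ = 0 := by
      conv_lhs => rw [h2]
      rw [real_inner_smul_left, horth, mul_zero]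
    rw [hcoef, zero_smul] at h1
    exact SphAux.sub_ne z h1
  refine ⟨⟨SphAux.Wset e₁, SphAux.Wset e₂,
    SphAux.isOpen_Wset e₁, SphAux.isOpen_Wset e₂,
    SphAux.Wset_inv e₁, SphAux.Wset_inv e₂, hcov,
    ⟨SphAux.secW e₁ he₁, SphAux.secW_pip e₁ he₁, SphAux.secW_equiv e₁ he₁⟩,
    ⟨SphAux.secW e₂ he₂, SphAux.secW_pip e₂ he₂, SphAux.secW_equiv e₂ he₂⟩⟩, ?_⟩
  -- the bound on the symmetric topological complexity
  have hsc : SecCover (piG (Sph n)) 2 :=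
    secCover_two (SphAux.Wset e₁) (SphAux.Wset e₂)
      (SphAux.isOpen_Wset e₁) (SphAux.isOpen_Wset e₂)
      (SphAux.Wset_inv e₁) (SphAux.Wset_inv e₂) hcov
      (SphAux.secW e₁ he₁) (SphAux.secW_pip e₁ he₁) (SphAux.secW_equiv e₁ he₁)
      (SphAux.secW e₂ he₂) (SphAux.secW_pip e₂ he₂) (SphAux.secW_equiv e₂ he₂)
  have hg : genus (piG (Sph n)) ≤ (2 : ℕ∞) := by
    simpa using genus_le_of_secCover hsc
  show 1 + genus (piG (Sph n)) ≤ 3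
  calc 1 + genus (piG (Sph n)) ≤ 1 + 2 := add_le_add_right hg 1
    _ = 3 := by norm_num
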